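/- (Elimination of κ.) Let G = (V, E) be a finite connected simple graph and D = (V, A) the associated directed graph with both arcs on each edge. In the polynomial ring ℚ[κ_v : v ∈ V; P_a : a ∈ A], let J be the detailed balance ideal generated by Π_{v∈V} κ_v − 1 together with the polynomials κ_v P_{v→w} − κ_w P_{w→v} for all arcs (v→w) ∈ A. Then the intersection J ∩ ℚ[P_a : a ∈ A] (the elimination ideal eliminating the κ variables) equals the K-ideal, i.e., the ideal of ℚ[P_a : a ∈ A] generated by the binomials P^ω − P^{r(ω)} over all closed paths ω of D. -/

import Mathlib

/-- The arcs of the directed graph `D = (V, A)` associated to a simple graph `G`. -/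
abbrev Arc {V : Type*} (G : SimpleGraph V) : Type _ := {p : V × V // G.Adj p.1 p.2}

/-- The reversed arc. -/
def arcRev {V : Type*} {G : SimpleGraph V} (a : Arc G) : Arc G :=
  ⟨(a.1.2, a.1.1), a.2.symm⟩


section
variable {V : Type*} {G : SimpleGraph V}

lemma arcRev_arcRev (a : Arc G) : arcRev (arcRev a) = a := rfl

lemma arcRev_involutive : Function.Involutive (arcRev : Arc G → Arc G) := fun _ => rfl

lemma arcRev_inj : Function.Injective (arcRev : Arc G → Arc G) := arcRev_involutive.injective

noncomputable def chain (P : Arc G → Prop)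
    (hstep : ∀ a, P a → ∃ b : Arc G, b.1.1 = a.1.2 ∧ P b) (a0 : Arc G) (h0 : P a0) :
    ℕ → {a : Arc G // P a}
  | 0 => ⟨a0, h0⟩
  | (k+1) => ⟨(hstep _ (chain P hstep a0 h0 k).2).choose,
      ((hstep _ (chain P hstep a0 h0 k).2).choose_spec).2⟩

lemma chain_adj (P : Arc G → Prop)
    (hstep : ∀ a, P a → ∃ b : Arc G, b.1.1 = a.1.2 ∧ P b) (a0 : Arc G) (h0 : P a0) (k : ℕ) :
    ((chain P hstep a0 h0 (k+1)).1).1.1 = ((chain P hstep a0 h0 k).1).1.2 :=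
  ((hstep _ (chain P hstep a0 h0 k).2).choose_spec).1

end

open MvPolynomial

lemma prod_monomial_one {σ ι : Type*} (s : Finset ι) (d : ι → (σ →₀ ℕ)) :
    (∏ i ∈ s, (monomial (d i) (1:ℚ))) = monomial (∑ i ∈ s, d i) 1 := by
  induction s using Finset.cons_induction with
  | empty => simp [monomial_zero']
  | cons a s ha ih => simp [Finset.prod_cons, Finset.sum_cons, ih, monomial_mul]

lemma single_prod {M ι : Type*} [AddCommMonoid M] (s : Finset ι) (x : ι → M) :
    (∏ i ∈ s, (AddMonoidAlgebra.single (x i) (1:ℚ))) =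
      AddMonoidAlgebra.single (∑ i ∈ s, x i) 1 := by
  induction s using Finset.cons_induction with
  | empty => simp [AddMonoidAlgebra.one_def]
  | cons a s ha ih =>
      simp [Finset.prod_cons, Finset.sum_cons, ih, AddMonoidAlgebra.single_mul_single]

lemma aeval_single_monomial {σ M : Type*} [Fintype σ] [AddCommMonoid M] (g : σ → M)
    (m : σ →₀ ℕ) (c : ℚ) :
    (aeval fun s => AddMonoidAlgebra.single (g s) (1:ℚ)) (monomial m c) =
      AddMonoidAlgebra.single (∑ s : σ, m s • g s) c := by
  rw [aeval_monomial, Finsupp.prod_fintype _ _ (fun i => pow_zero _)]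
  simp_rw [AddMonoidAlgebra.single_pow, one_pow]
  rw [single_prod, Algebra.algebraMap_eq_smul_one, AddMonoidAlgebra.one_def,
    smul_mul_assoc, AddMonoidAlgebra.single_mul_single, AddMonoidAlgebra.smul_single]
  simp

lemma mem_span_of_aeval_eq_zero {σ M : Type*} [Fintype σ] [AddCommMonoid M] (g : σ → M)
    (f : MvPolynomial σ ℚ)
    (hf : (aeval fun s => AddMonoidAlgebra.single (g s) (1:ℚ)) f = 0) :
    f ∈ Ideal.span {p : MvPolynomial σ ℚ | ∃ m m' : σ →₀ ℕ,
      (∑ s : σ, m s • g s) = (∑ s : σ, m' s • g s) ∧ p = monomial m 1 - monomial m' 1} := by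
  classical
  set u := fun s => AddMonoidAlgebra.single (g s) (1:ℚ) with hu
  set gg := fun m : σ →₀ ℕ => ∑ s : σ, m s • g s with hgg
  suffices H : ∀ n (f : MvPolynomial σ ℚ), f.support.card ≤ n →
      (aeval u) f = 0 → f ∈ Ideal.span {p : MvPolynomial σ ℚ | ∃ m m' : σ →₀ ℕ,
        gg m = gg m' ∧ p = monomial m 1 - monomial m' 1} by
    exact H f.support.card f le_rfl hf
  intro n
  induction n with
  | zero =>
      intro f hcard _
      have h0 : f = 0 := MvPolynomial.support_eq_empty.mp
        (Finset.card_eq_zero.mp (Nat.le_zero.mp hcard))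
      simp [h0]
  | succ n ih =>
      intro f hcard hf0
      by_cases hfz : f = 0
      · simp [hfz]
      obtain ⟨m0, hm0⟩ := (MvPolynomial.support_nonempty.mpr hfz)
      -- evaluate aeval u f at point gg m0
      have hsum : (aeval u) f = ∑ m ∈ f.support,
          AddMonoidAlgebra.single (gg m) (coeff m f) := by
        conv_lhs => rw [MvPolynomial.as_sum f]
        rw [map_sum]
        exact Finset.sum_congr rfl fun m _ => aeval_single_monomial g m _
      have heval : ∑ m ∈ f.support, (if gg m = gg m0 then coeff m f else 0) = 0 := by
        have h0 : (∑ m ∈ f.support, (Finsupp.single (gg m) (coeff m f) : M →₀ ℚ))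
            = (0 : M →₀ ℚ) := by
          have := congrArg AddMonoidAlgebra.coeff (hsum.symm.trans hf0)
          simpa [AddMonoidAlgebra.coeff_sum, AddMonoidAlgebra.coeff_single] using this
        have h1 := congrArg (fun x : M →₀ ℚ => x (gg m0)) h0
        simpa [Finsupp.finset_sum_apply, Finsupp.single_apply] using h1
      -- find a second monomial in the same class
      have hne : ∃ m1 ∈ f.support, m1 ≠ m0 ∧ gg m1 = gg m0 := by
        by_contra hcon
        push_neg at hcon
        have : ∑ m ∈ f.support, (if gg m = gg m0 then coeff m f else 0) = coeff m0 f := by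
          rw [Finset.sum_eq_single m0]
          · simp
          · intro m hm hmne
            rcases eq_or_ne (gg m) (gg m0) with h | h
            · exact absurd h (hcon m hm hmne)
            · simp [h]
          · intro h; exact absurd hm0 h
        rw [this] at heval
        exact (MvPolynomial.mem_support_iff.mp hm0) heval
      obtain ⟨m1, hm1s, hm1ne, hm1g⟩ := hne
      set c := coeff m0 f with hc
      set d : MvPolynomial σ ℚ := monomial m0 1 - monomial m1 1 with hd
      set f' := f - c • d with hf'
      have hdker : (aeval u) d = 0 := by
        rw [hd, map_sub, aeval_single_monomial, aeval_single_monomial,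
          show (∑ s : σ, m1 s • g s) = ∑ s : σ, m0 s • g s from hm1g]
        exact sub_self _
      have hf'0 : (aeval u) f' = 0 := by
        rw [hf', map_sub, hf0, map_smul, hdker, smul_zero, sub_zero]
      have hsupp : f'.support ⊆ f.support.erase m0 := by
        intro m hm
        rw [Finset.mem_erase]
        have hcoef : coeff m f' ≠ 0 := MvPolynomial.mem_support_iff.mp hm
        constructor
        · rintro rfl
          apply hcoef
          rw [hf', hd]
          simp [MvPolynomial.coeff_sub, MvPolynomial.coeff_smul, coeff_monomial,
            hm1ne, ← hc]
        · by_contra hns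
          apply hcoef
          have h0 : coeff m f = 0 := MvPolynomial.notMem_support_iff.mp hns
          have hmne0 : m ≠ m0 := by rintro rfl; exact hns hm0
          have hmne1 : m ≠ m1 := by rintro rfl; exact hns hm1s
          rw [hf', hd]
          simp [MvPolynomial.coeff_sub, MvPolynomial.coeff_smul, coeff_monomial,
            Ne.symm hmne0, Ne.symm hmne1, h0]
      have hcard' : f'.support.card ≤ n := by
        calc f'.support.card ≤ (f.support.erase m0).card := Finset.card_le_card hsupp
        _ = f.support.card - 1 := Finset.card_erase_of_mem hm0
        _ ≤ n := by omega
      have hmem := ih f' hcard' hf'0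
      have hdmem : d ∈ Ideal.span {p : MvPolynomial σ ℚ | ∃ m m' : σ →₀ ℕ,
          gg m = gg m' ∧ p = monomial m 1 - monomial m' 1} :=
        Ideal.subset_span ⟨m0, m1, hm1g.symm, hd⟩
      have : f = f' + c • d := by rw [hf']; ring
      rw [this, MvPolynomial.smul_eq_C_mul]
      exact add_mem hmem (Ideal.mul_mem_left _ _ hdmem)

open MvPolynomial

lemma prod_monomial_one' {σ ι : Type*} (s : Finset ι) (d : ι → (σ →₀ ℕ)) :
    (∏ i ∈ s, (monomial (d i) (1:ℚ))) = monomial (∑ i ∈ s, d i) 1 := by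
  induction s using Finset.cons_induction with
  | empty => simp [monomial_zero']
  | cons a s ha ih => simp [Finset.prod_cons, Finset.sum_cons, ih, monomial_mul]

section
variable {V : Type*} [Fintype V] [DecidableEq V] {G : SimpleGraph V} [DecidableRel G.Adj]

lemma lemB (m m' : Arc G →₀ ℕ)
    (H1 : ∀ a, m a + m (arcRev a) = m' a + m' (arcRev a))
    (H2 : ∀ v : V, (∑ a : Arc G, if (a : V × V).1 = v then m a else 0) =
      ∑ a : Arc G, if (a : V × V).1 = v then m' a else 0) :
    (monomial m 1 - monomial m' 1 : MvPolynomial (Arc G) ℚ) ∈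
      Ideal.span {f : MvPolynomial (Arc G) ℚ |
      ∃ (n : ℕ) (ω : Fin (n + 1) → V) (h : ∀ i, G.Adj (ω i) (ω (i + 1))),
        f = (∏ i, MvPolynomial.X (⟨(ω i, ω (i + 1)), h i⟩ : Arc G))
          - ∏ i, MvPolynomial.X (⟨(ω (i + 1), ω i), (h i).symm⟩ : Arc G)} := by
  classical
  set S : Set (MvPolynomial (Arc G) ℚ) := {f : MvPolynomial (Arc G) ℚ |
      ∃ (n : ℕ) (ω : Fin (n + 1) → V) (h : ∀ i, G.Adj (ω i) (ω (i + 1))),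
        f = (∏ i, MvPolynomial.X (⟨(ω i, ω (i + 1)), h i⟩ : Arc G))
          - ∏ i, MvPolynomial.X (⟨(ω (i + 1), ω i), (h i).symm⟩ : Arc G)} with hS
  suffices H : ∀ (N : ℕ) (m m' : Arc G →₀ ℕ), (∑ a : Arc G, (m' a - m a)) = N →
      (∀ a, m a + m (arcRev a) = m' a + m' (arcRev a)) →
      (∀ v : V, (∑ a : Arc G, if (a : V × V).1 = v then m a else 0) =
        ∑ a : Arc G, if (a : V × V).1 = v then m' a else 0) →
      (monomial m 1 - monomial m' 1 : MvPolynomial (Arc G) ℚ) ∈ Ideal.span S by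
    exact H _ m m' rfl H1 H2
  clear H1 H2 m m'
  intro N
  induction N using Nat.strong_induction_on with
  | _ N ih =>
  intro m m' hN H1 H2
  -- total masses agree
  have hsum : ∑ a : Arc G, m a = ∑ a : Arc G, m' a := by
    have h1 : ∑ a : Arc G, m (arcRev a) = ∑ a : Arc G, m a :=
      Fintype.sum_equiv (Function.Involutive.toPerm _ arcRev_involutive) _ _ (fun a => rfl)
    have h2 : ∑ a : Arc G, m' (arcRev a) = ∑ a : Arc G, m' a :=
      Fintype.sum_equiv (Function.Involutive.toPerm _ arcRev_involutive) _ _ (fun a => rfl)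
    have h3 : ∑ a : Arc G, (m a + m (arcRev a)) = ∑ a : Arc G, (m' a + m' (arcRev a)) :=
      Finset.sum_congr rfl (fun a _ => H1 a)
    rw [Finset.sum_add_distrib, Finset.sum_add_distrib, h1, h2] at h3
    omega
  by_cases hmm' : m = m'
  · rw [hmm', sub_self]; exact zero_mem _
  -- there is a positive arc
  set Pos : Arc G → Prop := fun a => m a < m' a with hPos
  have hex : ∃ a, Pos a := by
    by_contra hcon
    push_neg at hcon
    apply hmm'
    ext a
    have hle : ∀ b ∈ Finset.univ, m' b ≤ m b := by
      intro b _
      have := hcon b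
      simp only [hPos, not_lt] at this
      exact this
    have := (Finset.sum_eq_sum_iff_of_le hle).mp hsum.symm a (Finset.mem_univ a)
    omega
  obtain ⟨a0, ha0⟩ := hex
  have notPos_rev : ∀ a, Pos a → ¬ Pos (arcRev a) := by
    intro a ha hra
    have := H1 a
    simp only [hPos] at ha hra
    omega
  -- the step lemma
  have hstep : ∀ a, Pos a → ∃ b : Arc G, (b : V × V).1 = (a : V × V).2 ∧ Pos b := by
    intro a ha
    by_contra hcon
    push_neg at hcon
    have hlt : (∑ x : Arc G, if (x : V × V).1 = (a : V × V).2 then m' x else 0) <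
        ∑ x : Arc G, if (x : V × V).1 = (a : V × V).2 then m x else 0 := by
      apply Finset.sum_lt_sum
      · intro b _
        by_cases hb : (b : V × V).1 = (a : V × V).2
        · have := hcon b hb
          simp only [hPos] at this
          simp [hb]; omega
        · simp [hb]
      · refine ⟨arcRev a, Finset.mem_univ _, ?_⟩
        have htail : ((arcRev a : Arc G) : V × V).1 = (a : V × V).2 := rfl
        have := H1 a
        simp only [hPos] at ha
        simp [htail]
        omega
    rw [H2 ((a : V × V).2)] at hlt
    exact lt_irrefl _ hlt
  -- build the chain of positive arcs
  set ch := chain Pos hstep a0 ha0 with hch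
  set w : ℕ → V := fun k => ((ch k).1 : V × V).1 with hw
  have hQex : ∃ j, ∃ i, i < j ∧ w i = w j := by
    obtain ⟨p, q, hpq, hwpq⟩ := Fintype.exists_ne_map_eq_of_card_lt
      (fun i : Fin (Fintype.card V + 1) => w i) (by simp)
    have hv : p.val ≠ q.val := fun h => hpq (Fin.ext h)
    rcases lt_or_gt_of_ne hv with h | h
    · exact ⟨q.val, p.val, h, hwpq⟩
    · exact ⟨p.val, q.val, h, hwpq.symm⟩
  set j0 := Nat.find hQex with hj0def
  obtain ⟨i0, hi0j, hww⟩ := Nat.find_spec hQex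
  have winj : ∀ p q, p < q → q < j0 → w p ≠ w q := by
    intro p q hpq hq hEq
    exact Nat.find_min hQex hq ⟨p, hpq, hEq⟩
  set n := j0 - i0 - 1 with hn
  have hj0 : j0 = i0 + n + 1 := by omega
  set ω : Fin (n+1) → V := fun k => w (i0 + k.val) with hω
  set A : Fin (n+1) → Arc G := fun k => (ch (i0 + k.val)).1 with hA
  have hApos : ∀ k, Pos (A k) := fun k => (ch (i0 + k.val)).2
  have hAtail : ∀ k, ((A k : Arc G) : V × V).1 = ω k := fun k => rfl
  have hhead : ∀ k : ℕ, w (k+1) = ((ch k).1 : V × V).2 := fun k => chain_adj _ _ _ _ k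
  have hAhead : ∀ k, ((A k : Arc G) : V × V).2 = ω (k + 1) := by
    intro k
    rw [hω]
    simp only []
    rw [Fin.val_add_one]
    by_cases hk : k = Fin.last n
    · rw [if_pos hk]
      have h1 : w (i0 + 0) = w j0 := hww
      have h2 : w j0 = w (i0 + k.val + 1) := by rw [hj0, hk]; rfl
      rw [h1, h2, hhead]
    · rw [if_neg hk]
      have := hhead (i0 + k.val)
      rw [← this]
      congr 1
  have hadj : ∀ k, G.Adj (ω k) (ω (k + 1)) := by
    intro k
    have h2 := (A k).2
    rwa [hAtail, hAhead] at h2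
  have hAeq : ∀ k, A k = (⟨(ω k, ω (k + 1)), hadj k⟩ : Arc G) := by
    intro k
    apply Subtype.ext
    exact Prod.ext_iff.mpr ⟨hAtail k, hAhead k⟩
  have hAinj : Function.Injective A := by
    intro k l hkl
    by_contra hne
    have hklval : k.val ≠ l.val := fun h => hne (Fin.ext h)
    have h1 : w (i0 + k.val) = w (i0 + l.val) :=
      congrArg (fun a : Arc G => (a : V × V).1) hkl
    have hk : i0 + k.val < j0 := by have := k.isLt; omega
    have hl : i0 + l.val < j0 := by have := l.isLt; omega
    rcases lt_or_gt_of_ne hklval with h | h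
    · exact winj _ _ (by omega) hl h1
    · exact winj _ _ (by omega) hk h1.symm
  -- cycle count vectors
  set C : Arc G →₀ ℕ := ∑ k : Fin (n+1), Finsupp.single (A k) 1 with hC
  set Cr : Arc G →₀ ℕ := ∑ k : Fin (n+1), Finsupp.single (arcRev (A k)) 1 with hCr
  have hCapp : ∀ a, C a = (Finset.univ.filter (fun k => A k = a)).card := by
    intro a
    rw [hC, Finsupp.finset_sum_apply, Finset.card_filter]
    exact Finset.sum_congr rfl fun k _ => by rw [Finsupp.single_apply]
  have hCrapp : ∀ a, Cr a = C (arcRev a) := by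
    intro a
    rw [hCr, Finsupp.finset_sum_apply, hCapp, Finset.card_filter]
    refine Finset.sum_congr rfl fun k _ => ?_
    rw [Finsupp.single_apply]
    congr 1
    simp only [eq_iff_iff]
    exact ⟨fun h => by rw [← h, arcRev_arcRev], fun h => by rw [h, arcRev_arcRev]⟩
  have hCle1 : ∀ a, C a ≤ 1 := by
    intro a
    rw [hCapp]
    apply Finset.card_le_one.mpr
    intro p hp q hq
    rw [Finset.mem_filter] at hp hq
    exact hAinj (hp.2.trans hq.2.symm)
  have hCA : ∀ k, C (A k) = 1 := by
    intro k
    rw [hCapp]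
    rw [Finset.card_eq_one]
    exact ⟨k, by ext l; simp [hAinj.eq_iff]⟩
  have hCpos : ∀ a, C a ≠ 0 → Pos a := by
    intro a h
    rw [hCapp] at h
    obtain ⟨k, hk⟩ := Finset.card_ne_zero.mp h
    rw [Finset.mem_filter] at hk
    rw [← hk.2]
    exact hApos k
  have hCr0 : ∀ a, Pos a → Cr a = 0 := by
    intro a ha
    rw [hCrapp]
    by_contra h
    exact notPos_rev a ha (hCpos _ h)
  have hrev_lt : ∀ a, Pos a → m' (arcRev a) < m (arcRev a) := by
    intro a ha
    have := H1 a
    simp only [hPos] at ha ⊢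
    omega
  have hCr_le_m : ∀ a, Cr a ≤ m a := by
    intro a
    by_cases h : Cr a = 0
    · omega
    · have hp : Pos (arcRev a) := hCpos _ (by rwa [← hCrapp])
      have := hrev_lt _ hp
      rw [arcRev_arcRev] at this
      have h2 : Cr a ≤ 1 := by rw [hCrapp]; exact hCle1 _
      omega
  have hCrleF : Cr ≤ m := Finsupp.le_def.mpr hCr_le_m
  set m1 : Arc G →₀ ℕ := (m - Cr) + C with hm1
  have hm1app : ∀ a, m1 a = m a - Cr a + C a := by
    intro a
    rw [hm1, Finsupp.add_apply, Finsupp.tsub_apply]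
  -- H1 for m1
  have H1' : ∀ a, m1 a + m1 (arcRev a) = m' a + m' (arcRev a) := by
    intro a
    rw [← H1 a, hm1app, hm1app]
    have h1 := hCr_le_m a
    have h2 := hCr_le_m (arcRev a)
    have h3 : Cr a = C (arcRev a) := hCrapp a
    have h4 : Cr (arcRev a) = C a := by rw [hCrapp, arcRev_arcRev]
    omega
  -- H2 for m1
  have key : ∀ (B : Fin (n+1) → Arc G) (v : V),
      (∑ a : Arc G, if (a : V × V).1 = v then
        ((∑ k : Fin (n+1), Finsupp.single (B k) 1 : Arc G →₀ ℕ) a) else 0) =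
      ∑ k : Fin (n+1), if ((B k : Arc G) : V × V).1 = v then 1 else 0 := by
    intro B v
    have h1 : ∀ a : Arc G, (if (a : V × V).1 = v then
        ((∑ k : Fin (n+1), Finsupp.single (B k) 1 : Arc G →₀ ℕ) a) else 0) =
        ∑ k : Fin (n+1), (if (a : V × V).1 = v then (Finsupp.single (B k) 1 : Arc G →₀ ℕ) a else 0) := by
      intro a
      rw [Finsupp.finset_sum_apply]
      by_cases h : (a : V × V).1 = v
      · simp [h]
      · simp [h]
    rw [Finset.sum_congr rfl fun a _ => h1 a, Finset.sum_comm]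
    refine Finset.sum_congr rfl fun k _ => ?_
    rw [Finset.sum_eq_single (B k)]
    · rw [Finsupp.single_apply, if_pos rfl]
    · intro b _ hb
      rw [Finsupp.single_apply, if_neg (Ne.symm hb)]
      exact ite_self 0
    · intro h
      exact absurd (Finset.mem_univ _) h
  have hCC : ∀ v, (∑ a : Arc G, if (a : V × V).1 = v then C a else 0) =
      ∑ a : Arc G, if (a : V × V).1 = v then Cr a else 0 := by
    intro v
    rw [hC, hCr, key A v, key (fun k => arcRev (A k)) v]
    have h2 : ∀ k : Fin (n+1), ((arcRev (A k) : Arc G) : V × V).1 = ω (k + 1) := by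
      intro k
      have : ((arcRev (A k) : Arc G) : V × V).1 = ((A k : Arc G) : V × V).2 := rfl
      rw [this, hAhead]
    calc (∑ k : Fin (n+1), if ((A k : Arc G) : V × V).1 = v then 1 else 0)
        = ∑ k : Fin (n+1), if ω k = v then 1 else 0 :=
          Finset.sum_congr rfl fun k _ => by rw [hAtail]
      _ = ∑ k : Fin (n+1), if ω (k + 1) = v then 1 else 0 := by
          refine (Fintype.sum_equiv (Equiv.addRight (1 : Fin (n+1)))
            (fun k => if ω (k+1) = v then 1 else 0) (fun k => if ω k = v then 1 else 0)
            (fun k => by rw [Equiv.coe_addRight])).symm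
      _ = ∑ k : Fin (n+1), if ((arcRev (A k) : Arc G) : V × V).1 = v then 1 else 0 :=
          Finset.sum_congr rfl fun k _ => by rw [h2]
  have H2' : ∀ v : V, (∑ a : Arc G, if (a : V × V).1 = v then m1 a else 0) =
      ∑ a : Arc G, if (a : V × V).1 = v then m' a else 0 := by
    intro v
    rw [← H2 v]
    have hpt : ∀ a, m1 a + Cr a = m a + C a := by
      intro a
      have := hCr_le_m a
      rw [hm1app]
      omega
    have hsum2 : (∑ a : Arc G, if (a : V × V).1 = v then m1 a else 0) +
        (∑ a : Arc G, if (a : V × V).1 = v then Cr a else 0) =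
        (∑ a : Arc G, if (a : V × V).1 = v then m a else 0) +
        (∑ a : Arc G, if (a : V × V).1 = v then C a else 0) := by
      rw [← Finset.sum_add_distrib, ← Finset.sum_add_distrib]
      refine Finset.sum_congr rfl fun a _ => ?_
      by_cases h : (a : V × V).1 = v
      · simp only [if_pos h]; exact hpt a
      · simp [h]
    have := hCC v
    omega
  -- the measure decreases
  have hfacts : ∀ a : Arc G, C a ≤ 1 ∧ Cr a ≤ 1 ∧
      (C a ≠ 0 → m a < m' a ∧ Cr a = 0) ∧ (Cr a ≠ 0 → m' a < m a ∧ C a = 0) := by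
    intro a
    refine ⟨hCle1 a, by rw [hCrapp]; exact hCle1 _, ?_, ?_⟩
    · intro h
      have hp := hCpos a h
      exact ⟨hp, hCr0 a hp⟩
    · intro h
      have hp : Pos (arcRev a) := hCpos _ (by rwa [← hCrapp])
      have h1 := hrev_lt _ hp
      rw [arcRev_arcRev] at h1
      refine ⟨h1, ?_⟩
      by_contra h2
      exact notPos_rev a (hCpos a h2) hp
  have hm1lt : (∑ a : Arc G, (m' a - m1 a)) < N := by
    rw [← hN]
    apply Finset.sum_lt_sum
    · intro a _
      obtain ⟨h1, h2, h3, h4⟩ := hfacts a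
      rw [hm1app]
      by_cases hc : C a = 0
      · by_cases hcr : Cr a = 0
        · rw [hc, hcr]; omega
        · obtain ⟨h5, h6⟩ := h4 hcr
          omega
      · obtain ⟨h5, h6⟩ := h3 hc
        omega
    · refine ⟨A 0, Finset.mem_univ _, ?_⟩
      have h1 := hCA 0
      have h2 := hCr0 _ (hApos 0)
      have h3 := hApos 0
      simp only [hPos] at h3
      rw [hm1app, h1, h2]
      omega
  have hrec := ih _ hm1lt m1 m' rfl H1' H2'
  -- algebraic identity
  have hmsplit : (m - Cr) + Cr = m := tsub_add_cancel_of_le hCrleF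
  have hXA : ∀ k : Fin (n+1), (X (A k) : MvPolynomial (Arc G) ℚ) =
      monomial (Finsupp.single (A k) 1) 1 := by
    intro k
    rw [← X_pow_eq_monomial, pow_one]
  have hXAr : ∀ k : Fin (n+1), (X (arcRev (A k)) : MvPolynomial (Arc G) ℚ) =
      monomial (Finsupp.single (arcRev (A k)) 1) 1 := by
    intro k
    rw [← X_pow_eq_monomial, pow_one]
  have hCprod : (monomial C (1:ℚ)) = ∏ k : Fin (n+1), X (A k) := by
    rw [Finset.prod_congr rfl fun k _ => hXA k, prod_monomial_one', hC]
  have hCrprod : (monomial Cr (1:ℚ)) = ∏ k : Fin (n+1), X (arcRev (A k)) := by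
    rw [Finset.prod_congr rfl fun k _ => hXAr k, prod_monomial_one', hCr]
  have hgen : (∏ k : Fin (n+1), (X (A k) : MvPolynomial (Arc G) ℚ))
      - ∏ k : Fin (n+1), X (arcRev (A k)) ∈ S := by
    refine ⟨n, ω, hadj, ?_⟩
    congr 1
    · exact Finset.prod_congr rfl fun k _ => by rw [hAeq k]
    · refine Finset.prod_congr rfl fun k _ => ?_
      rw [hAeq k]
      rfl
  have hdiff1 : (monomial m (1:ℚ)) - monomial m1 1 =
      monomial (m - Cr) 1 * (monomial Cr 1 - monomial C 1) := by
    rw [mul_sub, monomial_mul, monomial_mul, mul_one, hmsplit, hm1]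
  have hmem1 : (monomial m (1:ℚ)) - monomial m1 1 ∈ Ideal.span S := by
    rw [hdiff1, hCprod, hCrprod]
    have : (∏ k : Fin (n+1), (X (arcRev (A k)) : MvPolynomial (Arc G) ℚ))
        - ∏ k : Fin (n+1), X (A k) =
        -((∏ k : Fin (n+1), (X (A k) : MvPolynomial (Arc G) ℚ))
          - ∏ k : Fin (n+1), X (arcRev (A k))) := by ring
    rw [this]
    exact Ideal.mul_mem_left _ _ (neg_mem (Ideal.subset_span hgen))
  have hfinal : (monomial m (1:ℚ)) - monomial m' 1 =
      ((monomial m (1:ℚ)) - monomial m1 1) + ((monomial m1 (1:ℚ)) - monomial m' 1) := by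
    ring
  rw [hfinal]
  exact add_mem hmem1 hrec

end


abbrev KM (V : Type*) := (V → ℤ) ⧸ AddSubgroup.zmultiples (Function.const V (1:ℤ))

section assembly
variable {V : Type*} [Fintype V] [DecidableEq V] {G : SimpleGraph V} [DecidableRel G.Adj]

def gfun : V ⊕ Arc G → (KM V) × (Arc G → ℕ) :=
  Sum.elim (fun v => (QuotientAddGroup.mk (Pi.single v (-1 : ℤ)), 0))
    (fun a => (QuotientAddGroup.mk (Pi.single ((a : V × V).1) (1 : ℤ)),
      Pi.single a 1 + Pi.single (arcRev a) 1))

lemma gfun_rel (a : Arc G) :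
    gfun (Sum.inl ((a : V × V).1)) + gfun (Sum.inr a) =
      gfun (Sum.inl ((a : V × V).2)) + gfun (Sum.inr (arcRev a)) := by
  simp only [gfun, Sum.elim_inl, Sum.elim_inr, Prod.mk_add_mk]
  refine Prod.ext ?_ ?_
  · show (QuotientAddGroup.mk _ + QuotientAddGroup.mk _ : KM V) =
      QuotientAddGroup.mk _ + QuotientAddGroup.mk _
    rw [← QuotientAddGroup.mk_add, ← QuotientAddGroup.mk_add]
    have h : ((arcRev a : Arc G) : V × V).1 = (a : V × V).2 := rfl
    congr 1
    rw [h, ← Pi.single_add, ← Pi.single_add]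
    simp
  · show (0 : Arc G → ℕ) + _ = (0 : Arc G → ℕ) + _
    rw [zero_add, zero_add, arcRev_arcRev]
    exact add_comm _ _

lemma gfun_total : (∑ v : V, gfun (G := G) (Sum.inl v)) = 0 := by
  refine Prod.ext ?_ ?_
  · rw [Prod.fst_sum]
    simp only [gfun, Sum.elim_inl]
    have h1 : (∑ v : V, (QuotientAddGroup.mk (Pi.single v (-1:ℤ)) : KM V)) =
        QuotientAddGroup.mk (∑ v : V, Pi.single v (-1:ℤ)) := by
      exact (map_sum (QuotientAddGroup.mk'
        (AddSubgroup.zmultiples (Function.const V (1:ℤ)))) (fun v => Pi.single v (-1:ℤ))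
        Finset.univ).symm
    rw [h1]
    have h2 : (∑ v : V, Pi.single v (-1:ℤ)) = Function.const V (-1:ℤ) := by
      ext u
      rw [Finset.sum_apply]
      rw [Finset.sum_eq_single u]
      · simp
      · intro v _ hv
        exact Pi.single_eq_of_ne (Ne.symm hv) _
      · intro h; exact absurd (Finset.mem_univ _) h
    rw [h2]
    show _ = (0 : KM V)
    rw [QuotientAddGroup.eq_zero_iff]
    refine AddSubgroup.mem_zmultiples_iff.mpr ⟨-1, ?_⟩
    ext u
    simp [Function.const]
  · rw [Prod.snd_sum]
    simp [gfun]


lemma J_le_ker :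
    Ideal.span
      ({(∏ v : V, MvPolynomial.X (Sum.inl v : V ⊕ Arc G)) - 1} ∪
       {f : MvPolynomial (V ⊕ Arc G) ℚ | ∃ a : Arc G,
          f = MvPolynomial.X (Sum.inl (a : V × V).1) * MvPolynomial.X (Sum.inr a)
            - MvPolynomial.X (Sum.inl (a : V × V).2) * MvPolynomial.X (Sum.inr (arcRev a))}) ≤
    RingHom.ker (aeval (R := ℚ)
      (fun s : V ⊕ Arc G => AddMonoidAlgebra.single (gfun (G := G) s) (1:ℚ))) := by
  rw [Ideal.span_le]
  rintro f (hf | ⟨a, rfl⟩)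
  · rw [Set.mem_singleton_iff] at hf
    subst hf
    rw [SetLike.mem_coe, RingHom.mem_ker, map_sub, map_one, map_prod]
    simp_rw [aeval_X]
    rw [single_prod, gfun_total, ← AddMonoidAlgebra.one_def, sub_self]
  · rw [SetLike.mem_coe, RingHom.mem_ker, map_sub, map_mul, map_mul]
    simp_rw [aeval_X]
    rw [AddMonoidAlgebra.single_mul_single, AddMonoidAlgebra.single_mul_single, gfun_rel]
    exact sub_self _

lemma extract (hV : Nonempty V) (m m' : Arc G →₀ ℕ)
    (h : (∑ s : Arc G, m s • gfun (G := G) (Sum.inr s)) = ∑ s : Arc G, m' s • gfun (Sum.inr s)) :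
    (∀ a, m a + m (arcRev a) = m' a + m' (arcRev a)) ∧
    (∀ v : V, (∑ a : Arc G, if (a : V × V).1 = v then m a else 0) =
      ∑ a : Arc G, if (a : V × V).1 = v then m' a else 0) := by
  classical
  -- second components
  have hsnd : ∀ (mm : Arc G →₀ ℕ) (b : Arc G),
      (∑ s : Arc G, mm s • gfun (G := G) (Sum.inr s)).2 b = mm b + mm (arcRev b) := by
    intro mm b
    rw [Prod.snd_sum]
    have hterm : ∀ s : Arc G, (mm s • gfun (G := G) (Sum.inr s)).2 b =
        mm s * ((Pi.single s (1:ℕ) : Arc G → ℕ) b) +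
          mm s * ((Pi.single (arcRev s) (1:ℕ) : Arc G → ℕ) b) := by
      intro s
      simp only [gfun, Sum.elim_inr, Prod.smul_mk]
      simp [Pi.smul_apply, Pi.add_apply, smul_eq_mul, mul_add]
    rw [Finset.sum_apply, Finset.sum_congr rfl fun s _ => hterm s, Finset.sum_add_distrib]
    congr 1
    · rw [Finset.sum_eq_single b]
      · simp
      · intro s _ hs
        rw [Pi.single_eq_of_ne (Ne.symm hs), mul_zero]
      · intro hb; exact absurd (Finset.mem_univ _) hb
    · rw [Finset.sum_eq_single (arcRev b)]
      · simp [arcRev_arcRev]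
      · intro s _ hs
        have hne : arcRev s ≠ b := fun hc => hs (by rw [← hc, arcRev_arcRev])
        rw [Pi.single_eq_of_ne (Ne.symm hne), mul_zero]
      · intro hb; exact absurd (Finset.mem_univ _) hb
  have H1 : ∀ a, m a + m (arcRev a) = m' a + m' (arcRev a) := by
    intro a
    rw [← hsnd m a, ← hsnd m' a, h]
  refine ⟨H1, ?_⟩
  -- total masses agree
  have hmass : ∑ a : Arc G, m a = ∑ a : Arc G, m' a := by
    have h1 : ∑ a : Arc G, m (arcRev a) = ∑ a : Arc G, m a :=
      Fintype.sum_equiv (Function.Involutive.toPerm _ arcRev_involutive) _ _ (fun a => rfl)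
    have h2 : ∑ a : Arc G, m' (arcRev a) = ∑ a : Arc G, m' a :=
      Fintype.sum_equiv (Function.Involutive.toPerm _ arcRev_involutive) _ _ (fun a => rfl)
    have h3 : ∑ a : Arc G, (m a + m (arcRev a)) = ∑ a : Arc G, (m' a + m' (arcRev a)) :=
      Finset.sum_congr rfl (fun a _ => H1 a)
    rw [Finset.sum_add_distrib, Finset.sum_add_distrib, h1, h2] at h3
    omega
  -- first components
  have hfst : ∀ (mm : Arc G →₀ ℕ),
      (∑ s : Arc G, mm s • gfun (G := G) (Sum.inr s)).1 =
        QuotientAddGroup.mk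
          (∑ s : Arc G, (mm s : ℤ) • (Pi.single ((s : V × V).1) (1:ℤ) : V → ℤ)) := by
    intro mm
    rw [Prod.fst_sum]
    calc ∑ s : Arc G, (mm s • gfun (G := G) (Sum.inr s)).1
        = ∑ s : Arc G, (QuotientAddGroup.mk' (AddSubgroup.zmultiples (Function.const V (1:ℤ))))
            ((mm s : ℤ) • (Pi.single ((s : V × V).1) (1:ℤ) : V → ℤ)) := by
          refine Finset.sum_congr rfl fun s _ => ?_
          simp only [gfun, Sum.elim_inr, Prod.smul_mk]
          rw [map_zsmul]
          show (mm s : ℕ) • (QuotientAddGroup.mk _ : KM V) = (mm s : ℤ) • QuotientAddGroup.mk _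
          rw [natCast_zsmul]
      _ = _ := by
          rw [← map_sum]
          rfl
  have hq : (QuotientAddGroup.mk
        (∑ s : Arc G, (m s : ℤ) • (Pi.single ((s : V × V).1) (1:ℤ) : V → ℤ)) : KM V) =
      QuotientAddGroup.mk
        (∑ s : Arc G, (m' s : ℤ) • (Pi.single ((s : V × V).1) (1:ℤ) : V → ℤ)) := by
    rw [← hfst m, ← hfst m', h]
  rw [QuotientAddGroup.eq_iff_sub_mem] at hq
  obtain ⟨z, hz⟩ := AddSubgroup.mem_zmultiples_iff.mp hq
  -- evaluate at each vertex
  set Sm : (Arc G →₀ ℕ) → V → ℤ :=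
    fun mm v => ∑ s : Arc G, if (s : V × V).1 = v then (mm s : ℤ) else 0 with hSm
  have hX : ∀ (mm : Arc G →₀ ℕ) (v : V),
      (∑ s : Arc G, (mm s : ℤ) • (Pi.single ((s : V × V).1) (1:ℤ) : V → ℤ)) v = Sm mm v := by
    intro mm v
    rw [Finset.sum_apply, hSm]
    refine Finset.sum_congr rfl fun s _ => ?_
    rw [Pi.smul_apply, Pi.single_apply]
    by_cases hsv : (s : V × V).1 = v
    · rw [if_pos hsv, if_pos hsv.symm]; simp
    · rw [if_neg hsv, if_neg (Ne.symm hsv)]; simp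
  have hzv : ∀ v : V, Sm m v - Sm m' v = z := by
    intro v
    have := congrFun hz v
    rw [Pi.smul_apply] at this
    have h2 : (z : ℤ) • (Function.const V (1:ℤ)) v = z := by simp
    rw [h2, Pi.sub_apply, hX m v, hX m' v] at this
    exact this.symm
  -- summing over v gives z * card V = 0
  have hsumv : ∀ (mm : Arc G →₀ ℕ), ∑ v : V, Sm mm v = ∑ s : Arc G, (mm s : ℤ) := by
    intro mm
    rw [hSm]
    rw [Finset.sum_comm]
    refine Finset.sum_congr rfl fun s _ => ?_
    rw [Finset.sum_ite_eq]
    simp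
  have hz0 : z = 0 := by
    have h4 : ∑ v : V, (Sm m v - Sm m' v) = (Fintype.card V : ℤ) * z := by
      rw [Finset.sum_congr rfl fun v _ => hzv v, Finset.sum_const, Finset.card_univ]
      simp [mul_comm]
    rw [Finset.sum_sub_distrib, hsumv m, hsumv m'] at h4
    have h5 : ∑ s : Arc G, (m s : ℤ) = ∑ s : Arc G, (m' s : ℤ) := by
      rw [← Nat.cast_sum, ← Nat.cast_sum, hmass]
    rw [h5, sub_self] at h4
    have h6 : (Fintype.card V : ℤ) ≠ 0 := by
      simp [Fintype.card_ne_zero]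
    exact (mul_eq_zero.mp h4.symm).resolve_left h6
  intro v
  have h7 : (∑ s : Arc G, if (s : V × V).1 = v then (m s : ℤ) else 0) =
      ∑ s : Arc G, if (s : V × V).1 = v then (m' s : ℤ) else 0 := by
    have := hzv v
    rw [hz0] at this
    have h7' : Sm m v = Sm m' v := by omega
    exact h7'
  have h8 : ∀ (mm : Arc G →₀ ℕ),
      (∑ s : Arc G, if (s : V × V).1 = v then (mm s : ℤ) else 0) =
        ((∑ s : Arc G, if (s : V × V).1 = v then mm s else 0 : ℕ) : ℤ) := by
    intro mm
    rw [Nat.cast_sum]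
    refine Finset.sum_congr rfl fun s _ => ?_
    by_cases hs : (s : V × V).1 = v <;> simp [hs]
  rw [h8 m, h8 m'] at h7
  exact_mod_cast h7

end assembly


/-- elimination of κ: the elimination ideal of the detailed balance ideal
`J = (Π_v κ_v − 1, κ_v P_{v→w} − κ_w P_{w→v} : (v→w) ∈ A)` obtained by eliminating the `κ`
variables equals the K-ideal, generated by the binomials `P^ω − P^{r(ω)}` over all closed
paths `ω`. Here `ℚ[P_a : a ∈ A]` is embedded into `ℚ[κ_v ; P_a]` by renaming variables. -/
theorem stmt_17 {V : Type*} [Fintype V] [DecidableEq V]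
    (G : SimpleGraph V) [DecidableRel G.Adj] (hG : G.Connected) :
    Ideal.comap
      (MvPolynomial.rename (Sum.inr : Arc G → V ⊕ Arc G) :
        MvPolynomial (Arc G) ℚ →ₐ[ℚ] MvPolynomial (V ⊕ Arc G) ℚ).toRingHom
      (Ideal.span
        ({(∏ v : V, MvPolynomial.X (Sum.inl v : V ⊕ Arc G)) - 1} ∪
         {f : MvPolynomial (V ⊕ Arc G) ℚ | ∃ a : Arc G,
            f = MvPolynomial.X (Sum.inl (a : V × V).1) * MvPolynomial.X (Sum.inr a)
              - MvPolynomial.X (Sum.inl (a : V × V).2) * MvPolynomial.X (Sum.inr (arcRev a))})) =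
    Ideal.span {f : MvPolynomial (Arc G) ℚ |
      ∃ (n : ℕ) (ω : Fin (n + 1) → V) (h : ∀ i, G.Adj (ω i) (ω (i + 1))),
        f = (∏ i, MvPolynomial.X (⟨(ω i, ω (i + 1)), h i⟩ : Arc G))
          - ∏ i, MvPolynomial.X (⟨(ω (i + 1), ω i), (h i).symm⟩ : Arc G)} := by
  classical
  set J : Ideal (MvPolynomial (V ⊕ Arc G) ℚ) := Ideal.span
        ({(∏ v : V, MvPolynomial.X (Sum.inl v : V ⊕ Arc G)) - 1} ∪
         {f : MvPolynomial (V ⊕ Arc G) ℚ | ∃ a : Arc G,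
            f = MvPolynomial.X (Sum.inl (a : V × V).1) * MvPolynomial.X (Sum.inr a)
              - MvPolynomial.X (Sum.inl (a : V × V).2) * MvPolynomial.X (Sum.inr (arcRev a))})
    with hJ
  apply le_antisymm
  · -- elimination ideal ≤ K-ideal
    intro f hf
    rw [Ideal.mem_comap] at hf
    have hker := J_le_ker (hJ ▸ hf)
    rw [RingHom.mem_ker] at hker
    have h0 : (aeval ((fun s => AddMonoidAlgebra.single (gfun (G := G) s) (1:ℚ)) ∘
        (Sum.inr : Arc G → V ⊕ Arc G))) f = 0 := by
      rw [← aeval_rename]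
      exact hker
    have hsp := mem_span_of_aeval_eq_zero (fun a : Arc G => gfun (G := G) (Sum.inr a)) f h0
    refine Ideal.span_le.mpr ?_ hsp
    rintro p ⟨m, m', hgg, rfl⟩
    obtain ⟨H1, H2⟩ := extract hG.nonempty m m' hgg
    exact lemB m m' H1 H2
  · rw [Ideal.span_le]
    rintro f ⟨n, ω, hadj, rfl⟩
    rw [SetLike.mem_coe, Ideal.mem_comap]
    show (rename (Sum.inr : Arc G → V ⊕ Arc G))
      ((∏ i, MvPolynomial.X (⟨(ω i, ω (i + 1)), hadj i⟩ : Arc G))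
        - ∏ i, MvPolynomial.X (⟨(ω (i + 1), ω i), (hadj i).symm⟩ : Arc G)) ∈ J
    rw [map_sub, map_prod, map_prod]
    simp_rw [rename_X]
    rw [← Ideal.Quotient.eq_zero_iff_mem, map_sub, map_prod, map_prod]
    set q := Ideal.Quotient.mk J with hq
    set a : Fin (n+1) → Arc G := fun i => (⟨(ω i, ω (i + 1)), hadj i⟩ : Arc G) with ha
    have harev : ∀ i, (⟨(ω (i + 1), ω i), (hadj i).symm⟩ : Arc G) = arcRev (a i) :=
      fun i => rfl
    have hrel : ∀ i, q (X (Sum.inl (ω i))) * q (X (Sum.inr (a i))) =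
        q (X (Sum.inl (ω (i+1)))) * q (X (Sum.inr (arcRev (a i)))) := by
      intro i
      have hmem : (X (Sum.inl ((a i : V × V).1)) * X (Sum.inr (a i))
          - X (Sum.inl ((a i : V × V).2)) * X (Sum.inr (arcRev (a i)))
            : MvPolynomial (V ⊕ Arc G) ℚ) ∈ J := by
        rw [hJ]
        exact Ideal.subset_span (Set.mem_union_right _ ⟨a i, rfl⟩)
      have h1 := Ideal.Quotient.eq_zero_iff_mem.mpr hmem
      rw [map_sub, map_mul, map_mul, sub_eq_zero] at h1
      exact h1
    have hone : q (∏ v : V, X (Sum.inl v)) = 1 := by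
      have hmem : ((∏ v : V, X (Sum.inl v)) - 1 : MvPolynomial (V ⊕ Arc G) ℚ) ∈ J := by
        rw [hJ]
        exact Ideal.subset_span (Set.mem_union_left _ rfl)
      have h1 := Ideal.Quotient.eq_zero_iff_mem.mpr hmem
      rw [map_sub, map_one, sub_eq_zero] at h1
      exact h1
    set P : MvPolynomial (V ⊕ Arc G) ℚ ⧸ J := ∏ i, q (X (Sum.inl (ω i))) with hP
    have hPA : P * (∏ i, q (X (Sum.inr (a i)))) =
        P * (∏ i, q (X (Sum.inr (arcRev (a i))))) := by
      rw [hP, ← Finset.prod_mul_distrib]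
      have hstep : ∀ i ∈ Finset.univ, q (X (Sum.inl (ω i))) * q (X (Sum.inr (a i))) =
          q (X (Sum.inl (ω (i+1)))) * q (X (Sum.inr (arcRev (a i)))) := fun i _ => hrel i
      rw [Finset.prod_congr rfl hstep, Finset.prod_mul_distrib]
      congr 1
      exact Fintype.prod_equiv (Equiv.addRight (1 : Fin (n+1)))
        (fun i => q (X (Sum.inl (ω (i+1))))) (fun i => q (X (Sum.inl (ω i))))
        (fun i => by rw [Equiv.coe_addRight])
    have hunit : (∏ i : Fin (n+1), q (∏ w ∈ Finset.univ.erase (ω i), X (Sum.inl w))) * P = 1 := by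
      rw [hP, ← Finset.prod_mul_distrib]
      have hstep : ∀ i ∈ Finset.univ,
          q (∏ w ∈ Finset.univ.erase (ω i), X (Sum.inl w)) * q (X (Sum.inl (ω i))) =
          q (∏ v : V, X (Sum.inl v)) := by
        intro i _
        rw [← map_mul]
        congr 1
        exact Finset.prod_erase_mul _ _ (Finset.mem_univ (ω i))
      rw [Finset.prod_congr rfl hstep]
      rw [Finset.prod_congr rfl (fun i (_ : i ∈ Finset.univ) => hone)]
      exact Finset.prod_const_one
    set y : MvPolynomial (V ⊕ Arc G) ℚ ⧸ J :=
      ∏ i : Fin (n+1), q (∏ w ∈ Finset.univ.erase (ω i), X (Sum.inl w)) with hy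
    have hAB : (∏ i, q (X (Sum.inr (a i)))) = ∏ i, q (X (Sum.inr (arcRev (a i)))) := by
      have h1 := congrArg (fun x => y * x) hPA
      simp only [← mul_assoc] at h1
      rw [hunit, one_mul, one_mul] at h1
      exact h1
    show (∏ i, q (X (Sum.inr (a i)))) - (∏ i, q (X (Sum.inr (arcRev (a i))))) = 0
    rw [hAB, sub_self]
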